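/- Let W, T1, Y1, X2, Z2, Y2 be discrete random variables such that Z2 is a deterministic function of X2, and X1 - W - X2 is a Markov chain with T1 a function of X1 and Y1 a function of X1 (for some discrete X1). If additionally T1 is conditionally independent of Z2 given W, then H(Y1 | W, T1) + H(Y2 | W, Z2) ≥ H(Y1 | W) whenever Y2 given (W, X2) has conditional entropy equal to H(T1 | W, X2) (injectivity: H(Y2 | W, X2) = H(T1 | W, X2)). -/

import Mathlib

open Finset Real

section Preliminaries

variable {Ω : Type} [Fintype Ω]

/-- Probability that random variable `X` equals `a` under pmf `μ` on a finite sample space. -/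
noncomputable def prob {α : Type} [Fintype α] [DecidableEq α]
    (μ : Ω → ℝ) (X : Ω → α) (a : α) : ℝ :=
  ∑ ω, if X ω = a then μ ω else 0

/-- `μ` is a probability mass function on the finite sample space. -/
def IsPMF (μ : Ω → ℝ) : Prop := (∀ ω, 0 ≤ μ ω) ∧ ∑ ω, μ ω = 1

/-- Shannon entropy of a random variable (natural logarithm base). -/
noncomputable def H {α : Type} [Fintype α] [DecidableEq α]
    (μ : Ω → ℝ) (X : Ω → α) : ℝ :=
  -∑ a, prob μ X a * Real.log (prob μ X a)

/-- The joint random variable `(X, Y)`. -/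
def pair {α β : Type} (X : Ω → α) (Y : Ω → β) : Ω → α × β := fun ω => (X ω, Y ω)

/-- Conditional entropy `H(X | Y)`. -/
noncomputable def condH {α β : Type} [Fintype α] [DecidableEq α] [Fintype β] [DecidableEq β]
    (μ : Ω → ℝ) (X : Ω → α) (Y : Ω → β) : ℝ :=
  H μ (pair X Y) - H μ Y

/-- Mutual information `I(X ; Y)`. -/
noncomputable def MI {α β : Type} [Fintype α] [DecidableEq α] [Fintype β] [DecidableEq β]
    (μ : Ω → ℝ) (X : Ω → α) (Y : Ω → β) : ℝ :=
  H μ X + H μ Y - H μ (pair X Y)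

/-- Conditional mutual information `I(X ; Y | Z)`. -/
noncomputable def cMI {α β γ : Type} [Fintype α] [DecidableEq α] [Fintype β] [DecidableEq β]
    [Fintype γ] [DecidableEq γ] (μ : Ω → ℝ) (X : Ω → α) (Y : Ω → β) (Z : Ω → γ) : ℝ :=
  condH μ X Z + condH μ Y Z - condH μ (pair X Y) Z

/-- Independence of two random variables. -/
def Indep {α β : Type} [Fintype α] [DecidableEq α] [Fintype β] [DecidableEq β]
    (μ : Ω → ℝ) (X : Ω → α) (Y : Ω → β) : Prop :=
  ∀ a b, prob μ (pair X Y) (a, b) = prob μ X a * prob μ Y b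

/-- Conditional independence of `X` and `Y` given `Z`, i.e. the Markov chain `X - Z - Y`. -/
def CondIndep {α β γ : Type} [Fintype α] [DecidableEq α] [Fintype β] [DecidableEq β]
    [Fintype γ] [DecidableEq γ] (μ : Ω → ℝ) (X : Ω → α) (Y : Ω → β) (Z : Ω → γ) : Prop :=
  ∀ a b c, prob μ (pair (pair X Y) Z) ((a, b), c) * prob μ Z c
    = prob μ (pair X Z) (a, c) * prob μ (pair Y Z) (b, c)

/-- Shannon entropy of a pmf on a finite alphabet. -/
noncomputable def Hp {α : Type} [Fintype α] (p : α → ℝ) : ℝ :=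
  -∑ a, p a * Real.log (p a)

/-- `p` is a probability distribution on the finite alphabet. -/
def IsDist {α : Type} [Fintype α] (p : α → ℝ) : Prop := (∀ a, 0 ≤ p a) ∧ ∑ a, p a = 1

/-- Point mass at a given element. -/
noncomputable def delta {α : Type} [DecidableEq α] (a0 : α) : α → ℝ :=
  fun a => if a = a0 then 1 else 0

end Preliminaries

section Lemmas

variable {Ω : Type} [Fintype Ω] {μ : Ω → ℝ}

lemma prob_nonneg {α : Type} [Fintype α] [DecidableEq α] (hμ : IsPMF μ)
    (X : Ω → α) (a : α) : 0 ≤ prob μ X a := by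
  refine Finset.sum_nonneg fun ω _ => ?_
  split
  · exact hμ.1 ω
  · exact le_rfl

lemma sum_prob {α : Type} [Fintype α] [DecidableEq α] (hμ : IsPMF μ)
    (X : Ω → α) : ∑ a, prob μ X a = 1 := by
  unfold prob
  rw [Finset.sum_comm]
  simp [hμ.2]

lemma prob_comp {α β : Type} [Fintype α] [DecidableEq α] [Fintype β] [DecidableEq β]
    (X : Ω → α) (f : α → β) (b : β) :
    prob μ (fun ω => f (X ω)) b = ∑ a ∈ univ.filter (fun a => f a = b), prob μ X a := by
  unfold prob
  rw [Finset.sum_comm]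
  refine Finset.sum_congr rfl fun ω _ => ?_
  rw [Finset.sum_ite_eq (univ.filter (fun a => f a = b)) (X ω) (fun _ => μ ω)]
  simp

lemma prob_le_comp {α β : Type} [Fintype α] [DecidableEq α] [Fintype β] [DecidableEq β]
    (hμ : IsPMF μ) (X : Ω → α) (f : α → β) (a : α) :
    prob μ X a ≤ prob μ (fun ω => f (X ω)) (f a) := by
  rw [prob_comp X f]
  exact Finset.single_le_sum (fun a' _ => prob_nonneg hμ X a') (by simp)

lemma sum_fiber {α β : Type} [Fintype α] [DecidableEq α] [Fintype β] [DecidableEq β]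
    (p : α → ℝ) (g : α → β) (F : β → ℝ) :
    ∑ b, (∑ a ∈ univ.filter (fun a => g a = b), p a) * F b = ∑ a, p a * F (g a) := by
  calc ∑ b, (∑ a ∈ univ.filter (fun a => g a = b), p a) * F b
      = ∑ b, ∑ a ∈ univ.filter (fun a => g a = b), p a * F (g a) := by
        refine Finset.sum_congr rfl fun b _ => ?_
        rw [Finset.sum_mul]
        exact Finset.sum_congr rfl fun a ha => by rw [(Finset.mem_filter.1 ha).2]
    _ = ∑ a, p a * F (g a) := Finset.sum_fiberwise _ _ _

lemma sum_fiber_prob {α β : Type} [Fintype α] [DecidableEq α] [Fintype β] [DecidableEq β]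
    (X : Ω → α) (f : α → β) (F : β → ℝ) :
    ∑ b, prob μ (fun ω => f (X ω)) b * F b = ∑ a, prob μ X a * F (f a) := by
  simp only [prob_comp]
  exact sum_fiber _ _ _

lemma H_comp_le {α β : Type} [Fintype α] [DecidableEq α] [Fintype β] [DecidableEq β]
    (hμ : IsPMF μ) (X : Ω → α) (f : α → β) :
    H μ (fun ω => f (X ω)) ≤ H μ X := by
  unfold H
  rw [sum_fiber_prob X f (fun b => Real.log (prob μ (fun ω => f (X ω)) b))]
  refine neg_le_neg (Finset.sum_le_sum fun a _ => ?_)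
  rcases (prob_nonneg hμ X a).lt_or_eq with h | h
  · exact mul_le_mul_of_nonneg_left
      (Real.log_le_log h (prob_le_comp hμ X f a)) h.le
  · simp [← h]

lemma H_comp_eq {α β : Type} [Fintype α] [DecidableEq α] [Fintype β] [DecidableEq β]
    (X : Ω → α) {f : α → β} (hf : Function.Injective f) :
    H μ (fun ω => f (X ω)) = H μ X := by
  unfold H
  rw [sum_fiber_prob X f (fun b => Real.log (prob μ (fun ω => f (X ω)) b))]
  have key : ∀ a, prob μ (fun ω => f (X ω)) (f a) = prob μ X a := by
    intro a
    rw [prob_comp]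
    have : univ.filter (fun a' => f a' = f a) = {a} := by
      ext a'; simp [hf.eq_iff]
    rw [this, Finset.sum_singleton]
  refine congrArg Neg.neg (Finset.sum_congr rfl fun a _ => by rw [key])

lemma marg_fst {α β : Type} [Fintype α] [DecidableEq α] [Fintype β] [DecidableEq β]
    (A : Ω → α) (B : Ω → β) (b : β) :
    ∑ a, prob μ (pair A B) (a, b) = prob μ B b := by
  unfold prob pair
  rw [Finset.sum_comm]
  refine Finset.sum_congr rfl fun ω _ => ?_
  simp [Prod.ext_iff, ite_and]

end Lemmas

section More

variable {Ω : Type} [Fintype Ω] {μ : Ω → ℝ}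

lemma prob_comp3 {α α' β γ : Type} [Fintype α] [DecidableEq α] [Fintype α'] [DecidableEq α']
    [Fintype β] [DecidableEq β] [Fintype γ] [DecidableEq γ]
    (X : Ω → α) (Y : Ω → β) (Z : Ω → γ) (f : α → α') (a : α') (b : β) (c : γ) :
    prob μ (pair (pair (fun ω => f (X ω)) Y) Z) ((a, b), c)
      = ∑ a' ∈ univ.filter (fun a' => f a' = a), prob μ (pair (pair X Y) Z) ((a', b), c) := by
  unfold prob pair
  rw [Finset.sum_comm]
  refine Finset.sum_congr rfl fun ω _ => ?_
  simp only [Prod.mk.injEq, ite_and]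
  rw [Finset.sum_ite_eq (univ.filter (fun a' => f a' = a)) (X ω)]
  simp

lemma prob_comp2 {α α' γ : Type} [Fintype α] [DecidableEq α] [Fintype α'] [DecidableEq α']
    [Fintype γ] [DecidableEq γ]
    (X : Ω → α) (Z : Ω → γ) (f : α → α') (a : α') (c : γ) :
    prob μ (pair (fun ω => f (X ω)) Z) (a, c)
      = ∑ a' ∈ univ.filter (fun a' => f a' = a), prob μ (pair X Z) (a', c) := by
  unfold prob pair
  rw [Finset.sum_comm]
  refine Finset.sum_congr rfl fun ω _ => ?_
  simp only [Prod.mk.injEq, ite_and]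
  rw [Finset.sum_ite_eq (univ.filter (fun a' => f a' = a)) (X ω)]
  simp

lemma condIndep_comp_left {α α' β γ : Type} [Fintype α] [DecidableEq α] [Fintype α'] [DecidableEq α']
    [Fintype β] [DecidableEq β] [Fintype γ] [DecidableEq γ]
    {X : Ω → α} {Y : Ω → β} {Z : Ω → γ} (f : α → α')
    (h : CondIndep μ X Y Z) : CondIndep μ (fun ω => f (X ω)) Y Z := by
  intro a b c
  rw [prob_comp3 X Y Z f, prob_comp2 X Z f, Finset.sum_mul, Finset.sum_mul]
  exact Finset.sum_congr rfl fun a' _ => h a' b c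

lemma H_condIndep {α β γ : Type} [Fintype α] [DecidableEq α]
    [Fintype β] [DecidableEq β] [Fintype γ] [DecidableEq γ] (hμ : IsPMF μ)
    {A : Ω → α} {B : Ω → β} {C : Ω → γ} (h : CondIndep μ A B C) :
    H μ (pair (pair A B) C) + H μ C = H μ (pair A C) + H μ (pair B C) := by
  set R := pair (pair A B) C with hR
  have eC : ∑ c, prob μ C c * Real.log (prob μ C c)
      = ∑ w, prob μ R w * Real.log (prob μ C w.2) :=
    sum_fiber_prob R (fun w => w.2) (fun c => Real.log (prob μ C c))
  have eAC : ∑ z, prob μ (pair A C) z * Real.log (prob μ (pair A C) z)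
      = ∑ w, prob μ R w * Real.log (prob μ (pair A C) (w.1.1, w.2)) :=
    sum_fiber_prob R (fun w => (w.1.1, w.2)) (fun z => Real.log (prob μ (pair A C) z))
  have eBC : ∑ z, prob μ (pair B C) z * Real.log (prob μ (pair B C) z)
      = ∑ w, prob μ R w * Real.log (prob μ (pair B C) (w.1.2, w.2)) :=
    sum_fiber_prob R (fun w => (w.1.2, w.2)) (fun z => Real.log (prob μ (pair B C) z))
  have key : ∀ w : (α × β) × γ,
      prob μ R w * Real.log (prob μ R w) + prob μ R w * Real.log (prob μ C w.2)
      = prob μ R w * Real.log (prob μ (pair A C) (w.1.1, w.2))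
        + prob μ R w * Real.log (prob μ (pair B C) (w.1.2, w.2)) := by
    rintro ⟨⟨a, b⟩, c⟩
    rcases (prob_nonneg hμ R ((a, b), c)).lt_or_eq with hr | hr
    · have hC : 0 < prob μ C c := lt_of_lt_of_le hr (prob_le_comp hμ R (fun w => w.2) ((a, b), c))
      have hAC : 0 < prob μ (pair A C) (a, c) :=
        lt_of_lt_of_le hr (prob_le_comp hμ R (fun w => (w.1.1, w.2)) ((a, b), c))
      have hBC : 0 < prob μ (pair B C) (b, c) :=
        lt_of_lt_of_le hr (prob_le_comp hμ R (fun w => (w.1.2, w.2)) ((a, b), c))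
      have hCI := h a b c
      have hlog : Real.log (prob μ R ((a, b), c) * prob μ C c)
          = Real.log (prob μ (pair A C) (a, c) * prob μ (pair B C) (b, c)) := by rw [hCI]
      rw [Real.log_mul hr.ne' hC.ne', Real.log_mul hAC.ne' hBC.ne'] at hlog
      simp only
      rw [← mul_add, ← mul_add, hlog]
    · simp [← hr]
  have S : ∑ w : (α × β) × γ,
      (prob μ R w * Real.log (prob μ R w) + prob μ R w * Real.log (prob μ C w.2))
      = ∑ w : (α × β) × γ, (prob μ R w * Real.log (prob μ (pair A C) (w.1.1, w.2))
        + prob μ R w * Real.log (prob μ (pair B C) (w.1.2, w.2))) :=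
    Finset.sum_congr rfl (fun w _ => key w)
  rw [Finset.sum_add_distrib, Finset.sum_add_distrib] at S
  unfold H
  rw [eC, eAC, eBC]
  linarith

end More

section KeyIneq

variable {Ω : Type} [Fintype Ω] {μ : Ω → ℝ}

lemma condH_le_comp {α β γ : Type} [Fintype α] [DecidableEq α]
    [Fintype β] [DecidableEq β] [Fintype γ] [DecidableEq γ] (hμ : IsPMF μ)
    (Y : Ω → α) (X : Ω → β) (g : β → γ) :
    condH μ Y X ≤ condH μ Y (fun ω => g (X ω)) := by
  classical
  set P := pair Y X with hP
  set G := fun ω => g (X ω) with hG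
  set Q := pair Y G with hQ
  -- abbreviations for distributions
  set p : α × β → ℝ := prob μ P with hp
  set pX : β → ℝ := prob μ X with hpX
  set q : α × γ → ℝ := prob μ Q with hq
  set qG : γ → ℝ := prob μ G with hqG
  have eX : ∑ x, pX x * Real.log (pX x) = ∑ z, p z * Real.log (pX z.2) :=
    sum_fiber_prob P (fun z => z.2) (fun x => Real.log (pX x))
  have eQ : ∑ z', q z' * Real.log (q z') = ∑ z, p z * Real.log (q (z.1, g z.2)) :=
    sum_fiber_prob P (fun z => (z.1, g z.2)) (fun z' => Real.log (q z'))
  have eG : ∑ c, qG c * Real.log (qG c) = ∑ z, p z * Real.log (qG (g z.2)) :=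
    sum_fiber_prob P (fun z => g z.2) (fun c => Real.log (qG c))
  set c : α × β → ℝ := fun z => if 0 < p z then pX z.2 / qG (g z.2) * q (z.1, g z.2) else 0 with hc
  set d : α × β → ℝ := fun z => if 0 < pX z.2 then pX z.2 / qG (g z.2) * q (z.1, g z.2) else 0 with hd
  have hple : ∀ z : α × β, p z ≤ pX z.2 := fun z => prob_le_comp hμ P (fun z => z.2) z
  have hqle : ∀ z : α × β, p z ≤ q (z.1, g z.2) := fun z => prob_le_comp hμ P (fun z => (z.1, g z.2)) z
  have hgle : ∀ x : β, pX x ≤ qG (g x) := fun x => prob_le_comp hμ X g x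
  have t1 : ∀ z : α × β, p z - c z ≤
      p z * Real.log (p z) + p z * Real.log (qG (g z.2))
        - p z * Real.log (pX z.2) - p z * Real.log (q (z.1, g z.2)) := by
    intro z
    by_cases hz : 0 < p z
    · have h1 : 0 < pX z.2 := lt_of_lt_of_le hz (hple z)
      have h2 : 0 < q (z.1, g z.2) := lt_of_lt_of_le hz (hqle z)
      have h3 : 0 < qG (g z.2) := lt_of_lt_of_le h1 (hgle z.2)
      set u := pX z.2 * q (z.1, g z.2) / (p z * qG (g z.2)) with hu
      have hupos : 0 < u := by positivity
      have hlog : Real.log u ≤ u - 1 := Real.log_le_sub_one_of_pos hupos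
      have hlogu : Real.log u = Real.log (pX z.2) + Real.log (q (z.1, g z.2))
          - Real.log (p z) - Real.log (qG (g z.2)) := by
        rw [hu, Real.log_div (by positivity) (by positivity),
          Real.log_mul h1.ne' h2.ne', Real.log_mul hz.ne' h3.ne']
        ring
      have hmul : p z * Real.log u ≤ p z * (u - 1) := mul_le_mul_of_nonneg_left hlog hz.le
      rw [hlogu] at hmul
      have hcz : c z = p z * u := by
        rw [hc]; simp only [if_pos hz]
        rw [hu]; field_simp
      nlinarith [hmul]
    · have hz0 : p z = 0 := le_antisymm (not_lt.1 hz) (prob_nonneg hμ P z)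
      rw [hc]; simp [hz, hz0]
  have t2 : ∀ z : α × β, c z ≤ d z := by
    intro z
    by_cases hz : 0 < p z
    · have h1 : 0 < pX z.2 := lt_of_lt_of_le hz (hple z)
      rw [hc, hd]; simp only [if_pos hz, if_pos h1]; exact le_rfl
    · rw [hc, hd]; simp only [if_neg hz]
      split
      · have h3 : (0:ℝ) ≤ qG (g z.2) := prob_nonneg hμ G (g z.2)
        have h2 : (0:ℝ) ≤ q (z.1, g z.2) := prob_nonneg hμ Q (z.1, g z.2)
        have h1 : (0:ℝ) ≤ pX z.2 := prob_nonneg hμ X z.2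
        positivity
      · exact le_rfl
  have t3 : ∑ z : α × β, d z = 1 := by
    have hsum : ∀ x : β, ∑ y : α, d (y, x) = pX x := by
      intro x
      by_cases hx : 0 < pX x
      · simp only [hd, if_pos hx]
        rw [← Finset.mul_sum]
        have hm : ∑ y : α, q (y, g x) = qG (g x) := marg_fst Y G (g x)
        rw [hm, div_mul_cancel₀]
        exact (lt_of_lt_of_le hx (hgle x)).ne'
      · have hx0 : pX x = 0 := le_antisymm (not_lt.1 hx) (prob_nonneg hμ X x)
        simp [hd, hx, hx0]
    rw [Fintype.sum_prod_type, Finset.sum_comm]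
    calc ∑ x : β, ∑ y : α, d (y, x) = ∑ x : β, pX x := by
          exact Finset.sum_congr rfl fun x _ => hsum x
      _ = 1 := sum_prob hμ X
  have t4 : ∑ z : α × β, p z = 1 := sum_prob hμ P
  have main : 0 ≤ ∑ z : α × β,
      (p z * Real.log (p z) + p z * Real.log (qG (g z.2))
        - p z * Real.log (pX z.2) - p z * Real.log (q (z.1, g z.2))) := by
    have hge : ∑ z : α × β, (p z - c z) ≤ ∑ z : α × β,
        (p z * Real.log (p z) + p z * Real.log (qG (g z.2))
          - p z * Real.log (pX z.2) - p z * Real.log (q (z.1, g z.2))) :=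
      Finset.sum_le_sum fun z _ => t1 z
    have hcd : ∑ z : α × β, c z ≤ ∑ z : α × β, d z := Finset.sum_le_sum fun z _ => t2 z
    have hsub : ∑ z : α × β, (p z - c z) = (∑ z : α × β, p z) - ∑ z : α × β, c z :=
      Finset.sum_sub_distrib _ _
    linarith
  unfold condH H
  rw [← hQ, ← hp, ← hpX, ← hq, ← hqG, eX, eQ, eG]
  rw [Finset.sum_sub_distrib, Finset.sum_sub_distrib, Finset.sum_add_distrib] at main
  linarith

end KeyIneq



set_option maxHeartbeats 1000000 in
theorem stmt6 {Ω : Type} [Fintype Ω] {𝒲 𝒳₁ 𝒳₂ 𝒯 𝒴₁ 𝒴₂ 𝒵 : Type}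
    [Fintype 𝒲] [DecidableEq 𝒲] [Fintype 𝒳₁] [DecidableEq 𝒳₁]
    [Fintype 𝒳₂] [DecidableEq 𝒳₂] [Fintype 𝒯] [DecidableEq 𝒯]
    [Fintype 𝒴₁] [DecidableEq 𝒴₁] [Fintype 𝒴₂] [DecidableEq 𝒴₂]
    [Fintype 𝒵] [DecidableEq 𝒵]
    (μ : Ω → ℝ) (hμ : IsPMF μ)
    (W : Ω → 𝒲) (X1 : Ω → 𝒳₁) (X2 : Ω → 𝒳₂)
    (T1 : Ω → 𝒯) (Y1 : Ω → 𝒴₁) (Y2 : Ω → 𝒴₂) (Z2 : Ω → 𝒵)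
    (z2 : 𝒳₂ → 𝒵) (t1 : 𝒳₁ → 𝒯) (y1 : 𝒳₁ → 𝒴₁)
    (hZ2 : Z2 = fun ω => z2 (X2 ω))
    (hT1 : T1 = fun ω => t1 (X1 ω))
    (hY1 : Y1 = fun ω => y1 (X1 ω))
    (hMarkov : CondIndep μ X1 X2 W)
    (hTZ : CondIndep μ T1 Z2 W)
    (hinj : condH μ Y2 (pair W X2) = condH μ T1 (pair W X2)) :
    condH μ Y1 W ≤ condH μ Y1 (pair W T1) + condH μ Y2 (pair W Z2) := by
  classical
  -- Step A : conditioning monotonicity via data processing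
  have stepA : condH μ Y1 W ≤ condH μ (pair Y1 T1) W := by
    unfold condH
    have hfeq : pair Y1 W
        = (fun ω => (fun z : (𝒴₁ × 𝒯) × 𝒲 => (z.1.1, z.2)) (pair (pair Y1 T1) W ω)) := rfl
    have h : H μ (pair Y1 W) ≤ H μ (pair (pair Y1 T1) W) := by
      rw [hfeq]
      exact H_comp_le hμ (pair (pair Y1 T1) W) (fun z => (z.1.1, z.2))
    linarith
  -- relabeling identities
  have e1 : H μ (pair Y1 (pair W T1)) = H μ (pair (pair Y1 T1) W) := by
    have hf : Function.Injective (fun z : (𝒴₁ × 𝒯) × 𝒲 => (z.1.1, (z.2, z.1.2))) := by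
      rintro ⟨⟨y, t⟩, w⟩ ⟨⟨y', t'⟩, w'⟩ h
      simp_all [Prod.ext_iff]
    have hfeq : pair Y1 (pair W T1)
        = (fun ω => (fun z : (𝒴₁ × 𝒯) × 𝒲 => (z.1.1, (z.2, z.1.2))) (pair (pair Y1 T1) W ω)) := rfl
    rw [hfeq]
    exact H_comp_eq (μ := μ) (f := fun z : (𝒴₁ × 𝒯) × 𝒲 => (z.1.1, (z.2, z.1.2))) (pair (pair Y1 T1) W) hf
  have e2 : H μ (pair W T1) = H μ (pair T1 W) := by
    have hf : Function.Injective (fun z : 𝒯 × 𝒲 => (z.2, z.1)) := by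
      rintro ⟨t, w⟩ ⟨t', w'⟩ h
      simp_all [Prod.ext_iff]
    have hfeq : pair W T1
        = (fun ω => (fun z : 𝒯 × 𝒲 => (z.2, z.1)) (pair T1 W ω)) := rfl
    rw [hfeq]
    exact H_comp_eq (μ := μ) (f := fun z : 𝒯 × 𝒲 => (z.2, z.1)) (pair T1 W) hf
  have chain1 : condH μ (pair Y1 T1) W = condH μ Y1 (pair W T1) + condH μ T1 W := by
    unfold condH
    linarith [e1, e2]
  -- Markov step : T1 ⫫ X2 | W
  have hCI : CondIndep μ T1 X2 W := by
    rw [hT1]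
    exact condIndep_comp_left t1 hMarkov
  have hI : H μ (pair (pair T1 X2) W) + H μ W = H μ (pair T1 W) + H μ (pair X2 W) :=
    H_condIndep hμ hCI
  have e3 : H μ (pair T1 (pair W X2)) = H μ (pair (pair T1 X2) W) := by
    have hf : Function.Injective (fun z : (𝒯 × 𝒳₂) × 𝒲 => (z.1.1, (z.2, z.1.2))) := by
      rintro ⟨⟨t, x⟩, w⟩ ⟨⟨t', x'⟩, w'⟩ h
      simp_all [Prod.ext_iff]
    have hfeq : pair T1 (pair W X2)
        = (fun ω => (fun z : (𝒯 × 𝒳₂) × 𝒲 => (z.1.1, (z.2, z.1.2))) (pair (pair T1 X2) W ω)) := rfl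
    rw [hfeq]
    exact H_comp_eq (μ := μ) (f := fun z : (𝒯 × 𝒳₂) × 𝒲 => (z.1.1, (z.2, z.1.2))) (pair (pair T1 X2) W) hf
  have e4 : H μ (pair W X2) = H μ (pair X2 W) := by
    have hf : Function.Injective (fun z : 𝒳₂ × 𝒲 => (z.2, z.1)) := by
      rintro ⟨x, w⟩ ⟨x', w'⟩ h
      simp_all [Prod.ext_iff]
    have hfeq : pair W X2
        = (fun ω => (fun z : 𝒳₂ × 𝒲 => (z.2, z.1)) (pair X2 W ω)) := rfl
    rw [hfeq]
    exact H_comp_eq (μ := μ) (f := fun z : 𝒳₂ × 𝒲 => (z.2, z.1)) (pair X2 W) hf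
  have chain2 : condH μ T1 W = condH μ T1 (pair W X2) := by
    unfold condH
    linarith [hI, e3, e4]
  -- Step C : conditioning on a function of X2
  have stepC : condH μ Y2 (pair W X2) ≤ condH μ Y2 (pair W Z2) := by
    have h := condH_le_comp hμ Y2 (pair W X2) (fun z => (z.1, z2 z.2))
    have hfeq : pair W (fun ω => z2 (X2 ω))
        = (fun ω => (fun z : 𝒲 × 𝒳₂ => (z.1, z2 z.2)) (pair W X2 ω)) := rfl
    rw [hZ2, hfeq]
    exact h
  calc condH μ Y1 W ≤ condH μ (pair Y1 T1) W := stepA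
    _ = condH μ Y1 (pair W T1) + condH μ T1 W := chain1
    _ = condH μ Y1 (pair W T1) + condH μ Y2 (pair W X2) := by rw [chain2, ← hinj]
    _ ≤ condH μ Y1 (pair W T1) + condH μ Y2 (pair W Z2) := by linarith [stepC]
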